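/- arXiv:2412.10889 — 3 statements merged into one kernel-verified Lean document; each statement's English description precedes it below -/
import Mathlib

section
/- Let $\xi_1,\dots,\xi_n$ be independent $\{0,1\}$-valued random variables with means $\lambda_i \in [0,1]$. There is an absolute constant $C$ such that for every integer $k$, $\mathbb{P}\left(\sum_{i=1}^n \xi_i = k\right) \leq C\left(\sum_{i=1}^n \lambda_i(1-\lambda_i)\right)^{-1/2}$, provided $\sum_i \lambda_i(1-\lambda_i) > 0$. -/
open MeasureTheory ProbabilityTheory Real intervalIntegral

-- aux 1: integral of product of independent RVs
lemma aux_int_prod {Ω : Type} [MeasureSpace Ω] [IsProbabilityMeasure (ℙ : Measure Ω)]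
    {n : ℕ} {ξ : Fin n → Ω → ℝ} (hm : ∀ i, Measurable (ξ i))
    (hind : iIndepFun ξ ℙ) (T : Finset (Fin n)) :
    (∫ ω, ∏ i ∈ T, ξ i ω) = ∏ i ∈ T, ∫ ω, ξ i ω := by
  classical
  induction T using Finset.induction_on with
  | empty => simp
  | @insert i s hi ih =>
    rw [Finset.prod_insert hi]
    have h := (hind.indepFun_finset_prod_of_notMem hm hi)
    have hprod : Measurable (∏ j ∈ s, ξ j) := by
      rw [show (∏ j ∈ s, ξ j) = fun ω => ∏ j ∈ s, ξ j ω from by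
        funext ω; exact Finset.prod_apply ω s ξ]
      exact s.measurable_prod fun j _ => hm j
    have := h.integral_mul_eq_mul_integral hprod.aestronglyMeasurable (hm i).aestronglyMeasurable
    rw [show ((∏ j ∈ s, ξ j) * ξ i) = fun ω => (∏ j ∈ s, ξ j ω) * ξ i ω from by
        funext ω; simp [Finset.prod_apply],
      show (∏ j ∈ s, ξ j) = fun ω => ∏ j ∈ s, ξ j ω from by
        funext ω; exact Finset.prod_apply ω s ξ] at this
    simp only [Finset.prod_insert hi]
    calc (∫ ω, ξ i ω * ∏ j ∈ s, ξ j ω) = ∫ ω, (∏ j ∈ s, ξ j ω) * ξ i ω := by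
          simp_rw [mul_comm]
      _ = (∫ ω, ∏ j ∈ s, ξ j ω) * ∫ ω, ξ i ω := this
      _ = (∏ j ∈ s, ∫ ω, ξ j ω) * ∫ ω, ξ i ω := by rw [ih]
      _ = (∫ ω, ξ i ω) * ∏ j ∈ s, ∫ ω, ξ j ω := mul_comm _ _

-- expansion of product
lemma aux_expand {n : ℕ} (g : Fin n → ℝ) (z : ℂ) :
    (∏ i, ((1:ℂ) + (g i : ℂ) * z)) =
      ∑ T ∈ (Finset.univ : Finset (Fin n)).powerset,
        ((∏ i ∈ T, g i : ℝ) : ℂ) * z ^ T.card := by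
  classical
  have := Finset.prod_add (fun i => ((g i : ℂ) * z)) (fun _ => (1:ℂ))
    (Finset.univ : Finset (Fin n))
  simp only [add_comm ((_ : ℂ) * z) 1] at this
  rw [this]
  refine Finset.sum_congr rfl fun T _ => ?_
  rw [Finset.prod_const_one, mul_one, Finset.prod_mul_distrib, Finset.prod_const]
  push_cast
  ring

lemma aux_charfun {Ω : Type} [MeasureSpace Ω] [IsProbabilityMeasure (ℙ : Measure Ω)]
    {n : ℕ} {ξ : Fin n → Ω → ℝ} {lam : Fin n → ℝ} (hm : ∀ i, Measurable (ξ i))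
    (h01 : ∀ i ω, ξ i ω = 0 ∨ ξ i ω = 1) (hmean : ∀ i, (∫ ω, ξ i ω) = lam i)
    (hind : iIndepFun ξ ℙ) (z : ℂ) :
    (∫ ω, ∏ i, ((1:ℂ) + (ξ i ω : ℂ) * z)) = ∏ i, ((1:ℂ) + (lam i : ℂ) * z) := by
  classical
  have hintR : ∀ T : Finset (Fin n), Integrable (fun ω => ∏ i ∈ T, ξ i ω) ℙ := by
    intro T
    refine (integrable_const (1:ℝ)).mono'
      (T.measurable_prod fun j _ => hm j).aestronglyMeasurable
      (Filter.Eventually.of_forall fun ω => ?_)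
    rw [Real.norm_eq_abs, Finset.abs_prod]
    refine (Finset.prod_le_one (fun i _ => abs_nonneg _) fun i _ => ?_)
    rcases h01 i ω with h | h <;> simp [h]
  have step : ∀ T : Finset (Fin n),
      (∫ ω, ((∏ i ∈ T, ξ i ω : ℝ) : ℂ) * z ^ T.card)
        = ((∏ i ∈ T, lam i : ℝ) : ℂ) * z ^ T.card := by
    intro T
    rw [MeasureTheory.integral_mul_const]
    have hor : (∫ a : Ω, ((∏ i ∈ T, ξ i a : ℝ) : ℂ)) = ((∫ a, ∏ i ∈ T, ξ i a : ℝ) : ℂ) :=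
      integral_ofReal
    rw [hor, aux_int_prod hm hind]
    congr 2
    exact Finset.prod_congr rfl fun i _ => hmean i
  calc (∫ ω, ∏ i, ((1:ℂ) + (ξ i ω : ℂ) * z))
      = ∫ ω, ∑ T ∈ (Finset.univ : Finset (Fin n)).powerset,
          ((∏ i ∈ T, ξ i ω : ℝ) : ℂ) * z ^ T.card := by
        exact integral_congr_ae (Filter.Eventually.of_forall fun ω => aux_expand _ z)
    _ = ∑ T ∈ (Finset.univ : Finset (Fin n)).powerset,
          ∫ ω, ((∏ i ∈ T, ξ i ω : ℝ) : ℂ) * z ^ T.card := by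
        refine integral_finset_sum _ fun T _ => ?_
        exact ((hintR T).ofReal).mul_const _
    _ = ∑ T ∈ (Finset.univ : Finset (Fin n)).powerset,
          ((∏ i ∈ T, lam i : ℝ) : ℂ) * z ^ T.card := by
        exact Finset.sum_congr rfl fun T _ => step T
    _ = ∏ i, ((1:ℂ) + (lam i : ℂ) * z) := (aux_expand lam z).symm



lemma aux_norm {lam : ℝ} (h0 : 0 ≤ lam) (h1 : lam ≤ 1) (t : ℝ) :
    ‖(1:ℂ) + (lam : ℂ) * (Complex.exp (t * Complex.I) - 1)‖
      ≤ Real.exp (-(lam * (1 - lam)) * (1 - Real.cos t)) := by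
  have hz : (1:ℂ) + (lam : ℂ) * (Complex.exp (t * Complex.I) - 1)
      = Complex.mk (1 + lam * (Real.cos t - 1)) (lam * Real.sin t) := by
    rw [Complex.exp_mul_I]
    apply Complex.ext <;>
      simp [Complex.cos_ofReal_re, Complex.sin_ofReal_re, Complex.add_re, Complex.add_im,
        Complex.mul_re, Complex.mul_im]
  have hsq : Complex.normSq ((1:ℂ) + (lam : ℂ) * (Complex.exp (t * Complex.I) - 1))
      = 1 - 2 * (lam * (1 - lam)) * (1 - Real.cos t) := by
    rw [hz, Complex.normSq_mk]
    have pyth := Real.sin_sq_add_cos_sq t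
    linear_combination (lam^2) * pyth
  have hc1 : Real.cos t ≤ 1 := Real.cos_le_one t
  have ha : 0 ≤ lam * (1 - lam) := mul_nonneg h0 (by linarith)
  have hle : Complex.normSq ((1:ℂ) + (lam : ℂ) * (Complex.exp (t * Complex.I) - 1))
      ≤ Real.exp (-(2 * (lam * (1 - lam)) * (1 - Real.cos t))) := by
    rw [hsq]
    have := Real.add_one_le_exp (-(2 * (lam * (1 - lam)) * (1 - Real.cos t)))
    linarith
  rw [Complex.norm_def]
  calc Real.sqrt (Complex.normSq _) ≤ Real.sqrt (Real.exp (-(2 * (lam * (1 - lam)) * (1 - Real.cos t)))) :=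
        Real.sqrt_le_sqrt hle
    _ = Real.exp (-(lam * (1 - lam)) * (1 - Real.cos t)) := by
        rw [show (-(2 * (lam * (1 - lam)) * (1 - Real.cos t)))
            = (-(lam * (1 - lam)) * (1 - Real.cos t)) * 2 by ring,
          Real.exp_mul, Real.rpow_two, Real.sqrt_sq (Real.exp_pos _).le]

lemma aux_jordan {t : ℝ} (ht : t ∈ Set.Ioc (-π) π) :
    2 / π ^ 2 * t ^ 2 ≤ 1 - Real.cos t := by
  have hpi := Real.pi_pos
  have habs : |t| ≤ π := abs_le.2 ⟨le_of_lt ht.1, ht.2⟩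
  have h1 : Real.sin (|t| / 2) ≥ 2 / π * (|t| / 2) :=
    Real.mul_le_sin (by positivity) (by linarith)
  have h2 : Real.sin (t / 2) ^ 2 = Real.sin (|t| / 2) ^ 2 := by
    rcases abs_cases t with ⟨h, _⟩ | ⟨h, _⟩
    · rw [h]
    · rw [h, show -t / 2 = -(t/2) by ring, Real.sin_neg, neg_sq]
  have hcos : Real.cos t = 1 - 2 * Real.sin (t / 2) ^ 2 := by
    have h := Real.cos_two_mul (t/2)
    rw [show 2 * (t/2) = t from by ring] at h
    have pyth2 := Real.sin_sq_add_cos_sq (t/2)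
    linarith
  have h3 : (2 / π * (|t| / 2)) ^ 2 ≤ Real.sin (t / 2) ^ 2 := by
    rw [h2]
    exact pow_le_pow_left₀ (by positivity) h1 2
  have h4 : (2 / π * (|t| / 2)) ^ 2 = t ^ 2 / π ^ 2 := by
    rw [mul_pow, div_pow, div_pow, sq_abs]; field_simp
  have h5 : 2 / π ^ 2 * t ^ 2 = 2 * (t ^ 2 / π ^ 2) := by ring
  rw [hcos]
  linarith



lemma aux_orth (m : ℤ) :
    (∫ t in Set.Ioc (-π) π, Complex.exp ((m : ℂ) * (t : ℂ) * Complex.I))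
      = if m = 0 then ((2 * π : ℝ) : ℂ) else 0 := by
  have hle : (-π : ℝ) ≤ π := by linarith [Real.pi_pos]
  have h := intervalIntegral.integral_of_le (f := fun t : ℝ => Complex.exp ((m : ℂ) * (t : ℂ) * Complex.I))
    (μ := volume) hle
  rw [← h]
  rcases eq_or_ne m 0 with hm | hm
  · simp only [hm, if_pos rfl, Int.cast_zero, zero_mul, Complex.exp_zero]
    rw [intervalIntegral.integral_const]
    push_cast
    ring_nf
    simp [Complex.ofReal_sub]
  · rw [if_neg hm]
    have hc : ((m : ℂ) * Complex.I) ≠ 0 := by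
      simp [Complex.ext_iff, Complex.I_ne_zero, Int.cast_injective]
      exact_mod_cast hm
    have := integral_exp_mul_complex (a := (-π : ℝ)) (b := π) hc
    have heq : (fun t : ℝ => Complex.exp ((m : ℂ) * (t : ℂ) * Complex.I))
        = fun t : ℝ => Complex.exp (((m : ℂ) * Complex.I) * (t : ℂ)) := by
      funext t; ring_nf
    rw [heq, this]
    have e1 : (m : ℂ) * Complex.I * (π : ℂ) = (m : ℤ) * (π * Complex.I) := by push_cast; ring
    have e2 : (m : ℂ) * Complex.I * ((-π : ℝ) : ℂ) = (-m : ℤ) * (π * Complex.I) := by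
      push_cast; ring
    rw [e1, e2, Complex.exp_int_mul, Complex.exp_int_mul, Complex.exp_pi_mul_I]
    have hne : ((-1 : ℂ)) ^ m - ((-1 : ℂ)) ^ (-m) = 0 := by
      have hmm : ((-1 : ℂ)) ^ m * ((-1 : ℂ)) ^ m = 1 := by
        rw [← zpow_add₀ (by norm_num : (-1:ℂ) ≠ 0)]
        rw [show m + m = 2 * m from by ring, zpow_mul]
        norm_num
      rw [zpow_neg, inv_eq_of_mul_eq_one_right hmm, sub_self]
    rw [hne, zero_div]


open Real in
theorem bernoulli_sum_anticoncentration :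
    ∃ C : ℝ, 0 < C ∧
      ∀ (Ω : Type) [MeasureSpace Ω], IsProbabilityMeasure (ℙ : Measure Ω) →
      ∀ (n : ℕ) (ξ : Fin n → Ω → ℝ) (lam : Fin n → ℝ),
      (∀ i, Measurable (ξ i)) →
      (∀ i ω, ξ i ω = 0 ∨ ξ i ω = 1) →
      (∀ i, (∫ ω, ξ i ω) = lam i) →
      (∀ i, lam i ∈ Set.Icc (0:ℝ) 1) →
      iIndepFun ξ ℙ →
      0 < ∑ i, lam i * (1 - lam i) →
      ∀ k : ℤ, (ℙ {ω | ∑ i, ξ i ω = (k:ℝ)}).toReal ≤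
        C / Real.sqrt (∑ i, lam i * (1 - lam i)) := by
  classical
  refine ⟨1, one_pos, ?_⟩
  intro Ω _ hprob n ξ lam hm h01 hmean hIcc hind hV k
  haveI := hprob
  set V : ℝ := ∑ i, lam i * (1 - lam i) with hVdef
  have hpi := Real.pi_pos
  set A : Set Ω := {ω | ∑ i, ξ i ω = (k:ℝ)} with hAdef
  have hS : Measurable fun ω => ∑ i, ξ i ω :=
    Finset.measurable_sum _ fun i _ => hm i
  have hA : MeasurableSet A := hS (measurableSet_singleton ((k:ℤ):ℝ))
  -- integer valued sums
  have hz : ∀ ω, ∃ z : ℤ, ∑ i, ξ i ω = (z : ℝ) := by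
    intro ω
    refine ⟨∑ i, if ξ i ω = 1 then 1 else 0, ?_⟩
    push_cast
    refine Finset.sum_congr rfl fun i _ => ?_
    rcases h01 i ω with h | h <;> simp [h]
  -- the function on the product space
  set g : ℝ → Ω → ℂ := fun t ω =>
    Complex.exp ((((∑ i, ξ i ω) - (k:ℝ) : ℝ) : ℂ) * (t:ℂ) * Complex.I) with hgdef
  set μt : Measure ℝ := volume.restrict (Set.Ioc (-π) π) with hμt
  haveI : IsFiniteMeasure μt := by
    constructor
    rw [hμt, Measure.restrict_apply_univ, Real.volume_Ioc]
    exact ENNReal.ofReal_lt_top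
  -- integrability on the product
  have hmg : Measurable (Function.uncurry g) := by
    apply Complex.measurable_exp.comp
    apply Measurable.mul_const
    exact ((Complex.measurable_ofReal.comp
        ((hS.comp measurable_snd).sub measurable_const)).mul
      (Complex.measurable_ofReal.comp measurable_fst))
  have hnorm1 : ∀ (r t : ℝ), ‖Complex.exp ((r : ℂ) * (t:ℂ) * Complex.I)‖ = 1 := by
    intro r t
    rw [Complex.norm_exp]
    simp
  have hint : Integrable (Function.uncurry g) (μt.prod ℙ) := by
    refine (integrable_const (1:ℝ)).mono' hmg.aestronglyMeasurable
      (Filter.Eventually.of_forall fun p => ?_)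
    simp only [Function.uncurry, hgdef]
    rw [hnorm1]
  have swap := MeasureTheory.integral_integral_swap (f := g) hint
  -- inner t-integral
  have hInner : ∀ ω, (∫ t, g t ω ∂μt) = A.indicator (fun _ => ((2 * π : ℝ) : ℂ)) ω := by
    intro ω
    obtain ⟨z, hzω⟩ := hz ω
    have hcast : (((∑ i, ξ i ω) - (k:ℝ) : ℝ) : ℂ) = ((z - k : ℤ) : ℂ) := by
      rw [hzω]; push_cast; ring
    have : (∫ t, g t ω ∂μt)
        = ∫ t in Set.Ioc (-π) π, Complex.exp (((z - k : ℤ) : ℂ) * (t:ℂ) * Complex.I) := by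
      rw [hμt]
      refine setIntegral_congr_fun measurableSet_Ioc fun t _ => ?_
      rw [hgdef]
      simp only []
      rw [hcast]
    rw [this, aux_orth]
    by_cases hmem : ω ∈ A
    · have h0 : z - k = 0 := by
        have : ∑ i, ξ i ω = (k:ℝ) := hmem
        rw [hzω] at this
        exact_mod_cast sub_eq_zero.2 (by exact_mod_cast this)
      rw [if_pos h0, Set.indicator_of_mem hmem]
    · have h0 : z - k ≠ 0 := by
        intro h
        apply hmem
        have : z = k := by omega
        show ∑ i, ξ i ω = (k:ℝ)
        rw [hzω, this]
      rw [if_neg h0, Set.indicator_of_notMem hmem]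
  -- inner ω-integral
  have hOuter : ∀ t : ℝ, (∫ ω, g t ω)
      = (∏ i, ((1:ℂ) + (lam i : ℂ) * (Complex.exp ((t:ℂ) * Complex.I) - 1)))
        * Complex.exp (((-(k:ℝ) : ℝ) : ℂ) * (t:ℂ) * Complex.I) := by
    intro t
    have hpt : ∀ ω, g t ω
        = (∏ i, ((1:ℂ) + (ξ i ω : ℂ) * (Complex.exp ((t:ℂ) * Complex.I) - 1)))
          * Complex.exp (((-(k:ℝ) : ℝ) : ℂ) * (t:ℂ) * Complex.I) := by
      intro ω
      rw [hgdef]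
      simp only []
      have hsum : (∑ i, ((ξ i ω : ℂ)) * (t:ℂ) * Complex.I)
          = (((∑ i, ξ i ω : ℝ)) : ℂ) * (t:ℂ) * Complex.I := by
        push_cast
        rw [← Finset.sum_mul, ← Finset.sum_mul]
      have harg : (((∑ i, ξ i ω) - (k:ℝ) : ℝ) : ℂ) * (t:ℂ) * Complex.I
          = (∑ i, ((ξ i ω : ℂ)) * (t:ℂ) * Complex.I)
            + (((-(k:ℝ) : ℝ) : ℂ) * (t:ℂ) * Complex.I) := by
        rw [hsum]; push_cast; ring
      rw [harg, Complex.exp_add, Complex.exp_sum]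
      congr 1
      refine Finset.prod_congr rfl fun i _ => ?_
      rcases h01 i ω with h | h <;> simp [h]
    calc (∫ ω, g t ω)
        = ∫ ω, (∏ i, ((1:ℂ) + (ξ i ω : ℂ) * (Complex.exp ((t:ℂ) * Complex.I) - 1)))
            * Complex.exp (((-(k:ℝ) : ℝ) : ℂ) * (t:ℂ) * Complex.I) := by
          exact integral_congr_ae (Filter.Eventually.of_forall hpt)
      _ = (∫ ω, ∏ i, ((1:ℂ) + (ξ i ω : ℂ) * (Complex.exp ((t:ℂ) * Complex.I) - 1)))
            * Complex.exp (((-(k:ℝ) : ℝ) : ℂ) * (t:ℂ) * Complex.I) := MeasureTheory.integral_mul_const _ _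
      _ = _ := by rw [aux_charfun hm h01 hmean hind]
  -- combine
  have hmain : (∫ t, (∏ i, ((1:ℂ) + (lam i : ℂ) * (Complex.exp ((t:ℂ) * Complex.I) - 1)))
        * Complex.exp (((-(k:ℝ) : ℝ) : ℂ) * (t:ℂ) * Complex.I) ∂μt)
      = ((ℙ A).toReal : ℂ) * ((2 * π : ℝ) : ℂ) := by
    calc (∫ t, (∏ i, ((1:ℂ) + (lam i : ℂ) * (Complex.exp ((t:ℂ) * Complex.I) - 1)))
          * Complex.exp (((-(k:ℝ) : ℝ) : ℂ) * (t:ℂ) * Complex.I) ∂μt)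
        = ∫ t, (∫ ω, g t ω) ∂μt :=
          integral_congr_ae (Filter.Eventually.of_forall fun t => (hOuter t).symm)
      _ = ∫ ω, (∫ t, g t ω ∂μt) := swap
      _ = ∫ ω, A.indicator (fun _ => ((2 * π : ℝ) : ℂ)) ω := by
          exact integral_congr_ae (Filter.Eventually.of_forall hInner)
      _ = (ℙ A).toReal • ((2 * π : ℝ) : ℂ) := integral_indicator_const _ hA
      _ = ((ℙ A).toReal : ℂ) * ((2 * π : ℝ) : ℂ) := by
          rw [Complex.real_smul]
  set p : ℝ := (ℙ A).toReal with hpdef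
  have hp0 : 0 ≤ p := ENNReal.toReal_nonneg
  -- norm bound chain
  have hnormval : ‖((p : ℂ)) * ((2 * π : ℝ) : ℂ)‖ = p * (2 * π) := by
    rw [norm_mul, Complex.norm_real, Complex.norm_real, Real.norm_eq_abs, Real.norm_eq_abs,
      abs_of_nonneg hp0, abs_of_nonneg (by positivity : (0:ℝ) ≤ 2 * π)]
  have hb : (0:ℝ) < 2 * V / π ^ 2 := by positivity
  have hIneq1 : p * (2 * π)
      ≤ ∫ t in Set.Ioc (-π) π, Real.exp (-(V * (1 - Real.cos t))) := by
    rw [← hnormval, ← hmain]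
    refine le_trans (norm_integral_le_integral_norm _) ?_
    rw [hμt]
    refine setIntegral_mono_on ?_ ?_ measurableSet_Ioc fun t _ => ?_
    · -- integrability of the norm function
      have hc1 : Continuous fun t : ℝ =>
          (∏ i, ((1:ℂ) + (lam i : ℂ) * (Complex.exp ((t:ℂ) * Complex.I) - 1)))
            * Complex.exp (((-(k:ℝ) : ℝ) : ℂ) * (t:ℂ) * Complex.I) := by
        apply Continuous.mul
        · apply continuous_finset_prod
          intro i _
          exact continuous_const.add (continuous_const.mul
            ((Complex.continuous_exp.comp
              (Complex.continuous_ofReal.mul continuous_const)).sub continuous_const))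
        · exact Complex.continuous_exp.comp
            ((continuous_const.mul Complex.continuous_ofReal).mul continuous_const)
      exact (hc1.norm.integrableOn_Ioc)
    · apply Continuous.integrableOn_Ioc
      exact Real.continuous_exp.comp
        ((continuous_const.mul (continuous_const.sub Real.continuous_cos)).neg)
    · rw [norm_mul, hnorm1 (-(k:ℝ)) t, mul_one]
      calc ‖∏ i, ((1:ℂ) + (lam i : ℂ) * (Complex.exp ((t:ℂ) * Complex.I) - 1))‖
          = ∏ i, ‖(1:ℂ) + (lam i : ℂ) * (Complex.exp ((t:ℂ) * Complex.I) - 1)‖ :=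
            norm_prod _ _
        _ ≤ ∏ i, Real.exp (-(lam i * (1 - lam i)) * (1 - Real.cos t)) := by
            refine Finset.prod_le_prod (fun i _ => norm_nonneg _) fun i _ => ?_
            exact aux_norm (hIcc i).1 (hIcc i).2 t
        _ = Real.exp (-(V * (1 - Real.cos t))) := by
            rw [← Real.exp_sum, hVdef]
            congr 1
            rw [Finset.sum_mul, ← Finset.sum_neg_distrib]
            exact Finset.sum_congr rfl fun i _ => by ring
            
  have hIneq2 : (∫ t in Set.Ioc (-π) π, Real.exp (-(V * (1 - Real.cos t))))
      ≤ ∫ t in Set.Ioc (-π) π, Real.exp (-(2 * V / π ^ 2) * t ^ 2) := by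
    refine setIntegral_mono_on ?_ ?_ measurableSet_Ioc fun t ht => ?_
    · apply Continuous.integrableOn_Ioc
      exact Real.continuous_exp.comp
        ((continuous_const.mul (continuous_const.sub Real.continuous_cos)).neg)
    · apply Continuous.integrableOn_Ioc
      exact Real.continuous_exp.comp (continuous_const.mul (continuous_pow 2))
    · apply Real.exp_le_exp.2
      have := aux_jordan ht
      have h2 : V * (2 / π ^ 2 * t ^ 2) ≤ V * (1 - Real.cos t) :=
        mul_le_mul_of_nonneg_left this hV.le
      have h3 : -(2 * V / π ^ 2) * t ^ 2 = -(V * (2 / π ^ 2 * t ^ 2)) := by ring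
      rw [h3]
      linarith
  have hIneq3 : (∫ t in Set.Ioc (-π) π, Real.exp (-(2 * V / π ^ 2) * t ^ 2))
      ≤ ∫ t : ℝ, Real.exp (-(2 * V / π ^ 2) * t ^ 2) := by
    refine setIntegral_le_integral (integrable_exp_neg_mul_sq hb) ?_
    exact Filter.Eventually.of_forall fun t => (Real.exp_pos _).le
  have hGauss : (∫ t : ℝ, Real.exp (-(2 * V / π ^ 2) * t ^ 2))
      = Real.sqrt (π / (2 * V / π ^ 2)) := integral_gaussian _
  have hsqrtV : (0:ℝ) < Real.sqrt V := Real.sqrt_pos.2 hV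
  have hfin : Real.sqrt (π / (2 * V / π ^ 2)) ≤ 2 * π / Real.sqrt V := by
    have h1 : π / (2 * V / π ^ 2) = π ^ 3 / (2 * V) := by
      field_simp
    have h2 : π ^ 3 / (2 * V) ≤ (2 * π / Real.sqrt V) ^ 2 := by
      rw [div_pow, Real.sq_sqrt hV.le]
      rw [div_le_div_iff₀ (by positivity) hV]
      nlinarith [mul_nonneg (by linarith [Real.pi_le_four] : (0:ℝ) ≤ 4 - π)
        (le_of_lt (mul_pos (mul_pos Real.pi_pos Real.pi_pos) hV)),
        le_of_lt (mul_pos (mul_pos Real.pi_pos Real.pi_pos) hV)]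
    rw [h1]
    calc Real.sqrt (π ^ 3 / (2 * V)) ≤ Real.sqrt ((2 * π / Real.sqrt V) ^ 2) :=
          Real.sqrt_le_sqrt h2
      _ = 2 * π / Real.sqrt V := Real.sqrt_sq (by positivity)
  have hfinal : p * (2 * π) ≤ 2 * π / Real.sqrt V := by
    calc p * (2 * π) ≤ _ := hIneq1
      _ ≤ _ := hIneq2
      _ ≤ _ := hIneq3
      _ = _ := hGauss
      _ ≤ _ := hfin
  rw [show (1:ℝ) / Real.sqrt V = (2 * π / Real.sqrt V) / (2 * π) from by
    field_simp]
  exact (le_div_iff₀ (by positivity : (0:ℝ) < 2 * π)).2 hfinal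
end

section
/- Let $P$ be a self-adjoint operator on a Hilbert space $H$ with $0 \leq P \leq 1$ and $P$ trace class, and let $Q$ be an orthogonal projection on $H$. Then $\mathrm{tr}(QPQ(1-P)) = \mathrm{tr}(PQ(1-P)) + \mathrm{tr}\left((QP(1-Q))(QP(1-Q))^*\right)$, and consequently $\mathrm{tr}(QP(1-P)) \leq \mathrm{tr}(QPQ(1-P))$. -/
open ContinuousLinearMap
open scoped RealInnerProductSpace

section aux
variable {H : Type*} [NormedAddCommGroup H] [InnerProductSpace ℝ H] [CompleteSpace H]
  {ι : Type*} (b : HilbertBasis ι ℝ H)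

private lemma sa_inner {X : H →L[ℝ] H} (hX : IsSelfAdjoint X) (x y : H) :
    ⟪X x, y⟫ = ⟪x, X y⟫ := by
  conv_lhs => rw [← hX.adjoint_eq]
  exact adjoint_inner_left X y x

private lemma hasSum_inner_sq (x : H) : HasSum (fun i => ⟪x, b i⟫ ^ 2) (‖x‖ ^ 2) := by
  have h := b.hasSum_inner_mul_inner x x
  rw [real_inner_self_eq_norm_sq] at h
  have hf : (fun i => ⟪x, b i⟫ ^ 2) = fun i => ⟪x, b i⟫ * ⟪b i, x⟫ := by
    funext i; rw [sq, real_inner_comm (b i) x]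
  rw [hf]; exact h

private lemma hs_adjoint {X : H →L[ℝ] H} (hX : Summable fun i => ‖X (b i)‖ ^ 2) :
    Summable fun i => ‖(adjoint X) (b i)‖ ^ 2 := by
  have hpos : ∀ p : ι × ι, 0 ≤ (fun p : ι × ι => ⟪X (b p.1), b p.2⟫ ^ 2) p :=
    fun p => sq_nonneg _
  have hrow : ∀ i, HasSum (fun j => ⟪X (b i), b j⟫ ^ 2) (‖X (b i)‖ ^ 2) :=
    fun i => hasSum_inner_sq b (X (b i))
  have hsum : Summable (fun p : ι × ι => ⟪X (b p.1), b p.2⟫ ^ 2) := by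
    rw [summable_prod_of_nonneg hpos]
    refine ⟨fun i => (hrow i).summable, ?_⟩
    have : (fun i => ∑' j, ⟪X (b i), b j⟫ ^ 2) = fun i => ‖X (b i)‖ ^ 2 := by
      funext i; exact (hrow i).tsum_eq
    rw [this]; exact hX
  have hswap : Summable (fun p : ι × ι => ⟪X (b p.2), b p.1⟫ ^ 2) := by
    have := hsum.prod_symm
    simpa [Prod.swap] using this
  have hcol : ∀ j, HasSum (fun i => ⟪X (b i), b j⟫ ^ 2) (‖(adjoint X) (b j)‖ ^ 2) := by
    intro j
    have h := hasSum_inner_sq b ((adjoint X) (b j))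
    convert h using 2 with i
    rw [← adjoint_inner_right, real_inner_comm]
  have h2 := (summable_prod_of_nonneg (fun p => sq_nonneg _)).mp hswap
  have : (fun j => ∑' i, ⟪X (b i), b j⟫ ^ 2) = fun j => ‖(adjoint X) (b j)‖ ^ 2 := by
    funext j; exact (hcol j).tsum_eq
  rw [← this]
  exact h2.2

private lemma hs_comp_left (C : H →L[ℝ] H) {X : H →L[ℝ] H}
    (hX : Summable fun i => ‖X (b i)‖ ^ 2) :
    Summable fun i => ‖(C ∘L X) (b i)‖ ^ 2 := by
  refine Summable.of_nonneg_of_le (fun i => sq_nonneg _)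
    (fun i => ?_) (hX.mul_left (‖C‖ ^ 2))
  have h1 : ‖(C ∘L X) (b i)‖ ≤ ‖C‖ * ‖X (b i)‖ := (C.le_opNorm _)
  calc ‖(C ∘L X) (b i)‖ ^ 2 ≤ (‖C‖ * ‖X (b i)‖) ^ 2 := by
        exact pow_le_pow_left₀ (norm_nonneg _) h1 2
    _ = ‖C‖ ^ 2 * ‖X (b i)‖ ^ 2 := by ring

private lemma hs_comp_right {X : H →L[ℝ] H} (D : H →L[ℝ] H)
    (hX : Summable fun i => ‖X (b i)‖ ^ 2) :
    Summable fun i => ‖(X ∘L D) (b i)‖ ^ 2 := by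
  have h1 : Summable fun i => ‖(adjoint X) (b i)‖ ^ 2 := hs_adjoint b hX
  have h2 : Summable fun i => ‖((adjoint D) ∘L (adjoint X)) (b i)‖ ^ 2 :=
    hs_comp_left b (adjoint D) h1
  have h3 := hs_adjoint b h2
  rwa [adjoint_comp, adjoint_adjoint, adjoint_adjoint] at h3

private lemma diag_summable {X Y : H →L[ℝ] H}
    (hX : Summable fun i => ‖X (b i)‖ ^ 2) (hY : Summable fun i => ‖Y (b i)‖ ^ 2) :
    Summable fun i => ⟪(X ∘L Y) (b i), b i⟫ := by
  have hX' := hs_adjoint b hX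
  refine Summable.of_abs (Summable.of_nonneg_of_le (fun i => abs_nonneg _) (fun i => ?_)
    (((hY.add hX').mul_left (1/2 : ℝ))))
  have h1 : ⟪(X ∘L Y) (b i), b i⟫ = ⟪Y (b i), (adjoint X) (b i)⟫ := by
    rw [comp_apply, ← adjoint_inner_right]
  rw [h1]
  calc |⟪Y (b i), (adjoint X) (b i)⟫| ≤ ‖Y (b i)‖ * ‖(adjoint X) (b i)‖ :=
        abs_real_inner_le_norm _ _
    _ ≤ 1/2 * (‖Y (b i)‖ ^ 2 + ‖(adjoint X) (b i)‖ ^ 2) := by nlinarith [sq_nonneg (‖Y (b i)‖ - ‖(adjoint X) (b i)‖)]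

private lemma trace_comm {X Y : H →L[ℝ] H}
    (hX : Summable fun i => ‖X (b i)‖ ^ 2) (hY : Summable fun i => ‖Y (b i)‖ ^ 2) :
    ∑' i, ⟪(X ∘L Y) (b i), b i⟫ = ∑' i, ⟪(Y ∘L X) (b i), b i⟫ := by
  have hX' := hs_adjoint b hX
  have hY' := hs_adjoint b hY
  set f : ι × ι → ℝ := fun p => ⟪Y (b p.1), b p.2⟫ * ⟪X (b p.2), b p.1⟫ with hf
  -- summability of the matrix entries of Y and X
  have hYsum : Summable (fun p : ι × ι => ⟪Y (b p.1), b p.2⟫ ^ 2) := by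
    rw [summable_prod_of_nonneg (fun p => sq_nonneg _)]
    refine ⟨fun i => (hasSum_inner_sq b (Y (b i))).summable, ?_⟩
    have : (fun i => ∑' j, ⟪Y (b i), b j⟫ ^ 2) = fun i => ‖Y (b i)‖ ^ 2 := by
      funext i; exact (hasSum_inner_sq b (Y (b i))).tsum_eq
    rw [this]; exact hY
  have hXsum : Summable (fun p : ι × ι => ⟪X (b p.2), b p.1⟫ ^ 2) := by
    have : Summable (fun p : ι × ι => ⟪X (b p.1), b p.2⟫ ^ 2) := by
      rw [summable_prod_of_nonneg (fun p => sq_nonneg _)]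
      refine ⟨fun i => (hasSum_inner_sq b (X (b i))).summable, ?_⟩
      have h : (fun i => ∑' j, ⟪X (b i), b j⟫ ^ 2) = fun i => ‖X (b i)‖ ^ 2 := by
        funext i; exact (hasSum_inner_sq b (X (b i))).tsum_eq
      rw [h]; exact hX
    simpa [Prod.swap] using this.prod_symm
  have hfsum : Summable f := by
    refine Summable.of_abs (Summable.of_nonneg_of_le (fun p => abs_nonneg _) (fun p => ?_)
      (((hYsum.add hXsum).mul_left (1/2 : ℝ))))
    rw [hf]
    calc |⟪Y (b p.1), b p.2⟫ * ⟪X (b p.2), b p.1⟫|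
        = |⟪Y (b p.1), b p.2⟫| * |⟪X (b p.2), b p.1⟫| := abs_mul _ _
      _ ≤ 1/2 * (⟪Y (b p.1), b p.2⟫ ^ 2 + ⟪X (b p.2), b p.1⟫ ^ 2) := by
          nlinarith [sq_nonneg (|⟪Y (b p.1), b p.2⟫| - |⟪X (b p.2), b p.1⟫|), sq_abs ⟪Y (b p.1), b p.2⟫, sq_abs ⟪X (b p.2), b p.1⟫]
  -- row sums
  have hrow : ∀ i, HasSum (fun j => f (i, j)) ⟪(X ∘L Y) (b i), b i⟫ := by
    intro i
    have h := b.hasSum_inner_mul_inner (Y (b i)) ((adjoint X) (b i))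
    have he : ⟪Y (b i), (adjoint X) (b i)⟫ = ⟪(X ∘L Y) (b i), b i⟫ := by
      rw [comp_apply]
      exact adjoint_inner_right X (Y (b i)) (b i)
    rw [he] at h
    have hfun : (fun j => ⟪Y (b i), b j⟫ * ⟪b j, (adjoint X) (b i)⟫) = fun j => f (i, j) := by
      funext j
      rw [adjoint_inner_right]
    rwa [hfun] at h
  have hcol : ∀ j, HasSum (fun i => f (i, j)) ⟪(Y ∘L X) (b j), b j⟫ := by
    intro j
    have h := b.hasSum_inner_mul_inner (X (b j)) ((adjoint Y) (b j))
    have he : ⟪X (b j), (adjoint Y) (b j)⟫ = ⟪(Y ∘L X) (b j), b j⟫ := by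
      rw [comp_apply]
      exact adjoint_inner_right Y (X (b j)) (b j)
    rw [he] at h
    have hfun : (fun i => ⟪X (b j), b i⟫ * ⟪b i, (adjoint Y) (b j)⟫) = fun i => f (i, j) := by
      funext i
      rw [adjoint_inner_right, mul_comm]
    rwa [hfun] at h
  calc ∑' i, ⟪(X ∘L Y) (b i), b i⟫ = ∑' i, ∑' j, f (i, j) := by
        congr 1; funext i; exact (hrow i).tsum_eq.symm
    _ = ∑' p : ι × ι, f p := (Summable.tsum_prod' hfsum (fun i => (hrow i).summable)).symm
    _ = ∑' p : ι × ι, f (Prod.swap p) := by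
        have h := (Equiv.prodComm ι ι).tsum_eq (fun p : ι × ι => f (Prod.swap p))
        simpa using h
    _ = ∑' j, ∑' i, f (i, j) := Summable.tsum_prod' hfsum.prod_symm (fun j => (hcol j).summable)
    _ = ∑' j, ⟪(Y ∘L X) (b j), b j⟫ := by
        congr 1; funext j; exact (hcol j).tsum_eq

end aux

section aux2
variable {H : Type*} [NormedAddCommGroup H] [InnerProductSpace ℝ H] [CompleteSpace H]

private lemma sa_inner' {X : H →L[ℝ] H} (hX : IsSelfAdjoint X) (x y : H) :
    ⟪X x, y⟫ = ⟪x, X y⟫ := by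
  conv_lhs => rw [← hX.adjoint_eq]
  exact adjoint_inner_left X y x

private lemma norm_le_of_inner {S : H →L[ℝ] H} (hS : IsSelfAdjoint S) {c : ℝ} (hc : 0 ≤ c)
    (h1 : ∀ x, 0 ≤ ⟪S x, x⟫) (h2 : ∀ x, ⟪S x, x⟫ ≤ c * ‖x‖ ^ 2) : ‖S‖ ≤ c := by
  refine opNorm_le_bound S hc (fun x => ?_)
  rcases eq_or_ne (S x) 0 with h | h
  · rw [h, norm_zero]
    exact mul_nonneg hc (norm_nonneg x)
  have key : ∀ y, ‖y‖ = ‖x‖ → ⟪S x, y⟫ ≤ c * ‖x‖ ^ 2 := by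
    intro y hy
    have hsym : ⟪S y, x⟫ = ⟪S x, y⟫ := by
      rw [sa_inner' hS, real_inner_comm]
    have e1 : 4 * ⟪S x, y⟫ = ⟪S (x + y), x + y⟫ - ⟪S (x - y), x - y⟫ := by
      simp only [map_add, map_sub, inner_add_left, inner_add_right, inner_sub_left,
        inner_sub_right]
      linarith [hsym]
    have e2 : ⟪S (x + y), x + y⟫ ≤ c * ‖x + y‖ ^ 2 := h2 _
    have e3 : 0 ≤ ⟪S (x - y), x - y⟫ := h1 _
    have e4 : ‖x + y‖ ≤ ‖x‖ + ‖y‖ := norm_add_le _ _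
    have e5 : ‖x + y‖ ^ 2 ≤ (2 * ‖x‖) ^ 2 := by
      have h' : ‖x + y‖ ≤ 2 * ‖x‖ := by rw [two_mul]; nlinarith [hy.le]
      exact pow_le_pow_left₀ (norm_nonneg _) h' 2
    nlinarith [mul_le_mul_of_nonneg_left e5 hc]
  have hSx : 0 < ‖S x‖ := norm_pos_iff.mpr h
  have hkey := key ((‖x‖ / ‖S x‖) • S x) (by
    rw [norm_smul, Real.norm_eq_abs, abs_div, abs_of_nonneg (norm_nonneg x),
      abs_of_nonneg (norm_nonneg (S x)), div_mul_cancel₀]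
    exact hSx.ne')
  rw [real_inner_smul_right, real_inner_self_eq_norm_sq] at hkey
  have h6 : ‖S x‖ * ‖x‖ ≤ c * ‖x‖ ^ 2 := by
    have heq : ‖x‖ / ‖S x‖ * ‖S x‖ ^ 2 = ‖x‖ * ‖S x‖ := by
      field_simp
    rw [heq] at hkey
    linarith
  rcases eq_or_lt_of_le (norm_nonneg x) with hx | hx
  · have hx0 : x = 0 := by simpa using hx.symm
    simp [hx0]
  · have h7 : ‖S x‖ * ‖x‖ ≤ (c * ‖x‖) * ‖x‖ := by nlinarith
    exact le_of_mul_le_mul_right h7 hx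

private lemma exists_sqrt (P : H →L[ℝ] H) (hPsa : IsSelfAdjoint P)
    (hPpos : ∀ x, 0 ≤ ⟪P x, x⟫) (hPcontr : ∀ x, ⟪P x, x⟫ ≤ ⟪x, x⟫) :
    ∃ R : H →L[ℝ] H, IsSelfAdjoint R ∧ R ∘L R = P := by
  classical
  set Y : H →L[ℝ] H := 1 - P with hY
  have hYsa : IsSelfAdjoint Y := (IsSelfAdjoint.one (R := H →L[ℝ] H)).sub hPsa
  have hYinner : ∀ x : H, ⟪Y x, x⟫ = ⟪x, x⟫ - ⟪P x, x⟫ := by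
    intro x
    simp [hY, sub_apply, inner_sub_left, one_apply]
  have hYpos : ∀ x, 0 ≤ ⟪Y x, x⟫ := fun x => by
    rw [hYinner]; linarith [hPcontr x]
  have hYcontr : ∀ x, ⟪Y x, x⟫ ≤ 1 * ‖x‖ ^ 2 := fun x => by
    rw [hYinner, one_mul, ← real_inner_self_eq_norm_sq]; linarith [hPpos x]
  have hYnorm : ‖Y‖ ≤ 1 := norm_le_of_inner hYsa zero_le_one hYpos hYcontr
  have hpowpos : ∀ (k : ℕ) (x : H), 0 ≤ ⟪(Y ^ k) x, x⟫ := by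
    intro k x
    rcases Nat.even_or_odd k with ⟨m, hm⟩ | ⟨m, hm⟩
    · subst hm
      rw [pow_add, ContinuousLinearMap.mul_apply, sa_inner' (hYsa.pow m)]
      exact real_inner_self_nonneg
    · subst hm
      have hsplit : Y ^ (2 * m + 1) = Y ^ m * (Y * Y ^ m) := by
        rw [show 2 * m + 1 = m + (1 + m) by ring, pow_add, pow_add, pow_one]
      rw [hsplit, ContinuousLinearMap.mul_apply, sa_inner' (hYsa.pow m), ContinuousLinearMap.mul_apply]
      exact hYpos _
  have hpowcontr : ∀ (k : ℕ) (x : H), ⟪(Y ^ k) x, x⟫ ≤ ‖x‖ ^ 2 := by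
    intro k x
    have h1 : ⟪(Y ^ k) x, x⟫ ≤ ‖(Y ^ k) x‖ * ‖x‖ := real_inner_le_norm _ _
    have h2 : ‖(Y ^ k) x‖ ≤ ‖Y ^ k‖ * ‖x‖ := le_opNorm _ _
    have h3 : ‖Y ^ k‖ ≤ 1 := by
      rcases Nat.eq_zero_or_pos k with rfl | hk
      · rw [pow_zero]
        calc ‖(1 : H →L[ℝ] H)‖ = ‖ContinuousLinearMap.id ℝ H‖ := rfl
          _ ≤ 1 := norm_id_le
      · exact (norm_pow_le' Y hk).trans (pow_le_one₀ (norm_nonneg _) hYnorm)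
    nlinarith [norm_nonneg ((Y ^ k) x), norm_nonneg x,
      mul_le_mul_of_nonneg_right h3 (norm_nonneg x)]
  -- polynomial iteration for 1 - sqrt(1 - y)
  let u : ℕ → Polynomial ℝ := fun n =>
    Nat.rec 0 (fun _ p => Polynomial.C (1/2 : ℝ) * (Polynomial.X + p ^ 2)) n
  have hu0 : u 0 = 0 := rfl
  have hus : ∀ n, u (n + 1) = Polynomial.C (1/2 : ℝ) * (Polynomial.X + (u n) ^ 2) :=
    fun n => rfl
  have hCpos : ∀ k, 0 ≤ (Polynomial.C (1/2 : ℝ)).coeff k := by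
    intro k
    rcases eq_or_ne k 0 with rfl | hk
    · simp
    · simp [Polynomial.coeff_C, hk]
  have hXpos : ∀ k, 0 ≤ (Polynomial.X : Polynomial ℝ).coeff k := by
    intro k
    rcases eq_or_ne k 1 with rfl | hk
    · simp
    · simp [Polynomial.coeff_X, Ne.symm hk]
  have hmulpos : ∀ p q : Polynomial ℝ, (∀ k, 0 ≤ p.coeff k) → (∀ k, 0 ≤ q.coeff k) →
      ∀ k, 0 ≤ (p * q).coeff k := by
    intro p q hp hq k
    rw [Polynomial.coeff_mul]
    exact Finset.sum_nonneg fun x _ => mul_nonneg (hp _) (hq _)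
  have haddpos : ∀ p q : Polynomial ℝ, (∀ k, 0 ≤ p.coeff k) → (∀ k, 0 ≤ q.coeff k) →
      ∀ k, 0 ≤ (p + q).coeff k := by
    intro p q hp hq k
    rw [Polynomial.coeff_add]
    exact add_nonneg (hp k) (hq k)
  have hupos : ∀ n k, 0 ≤ (u n).coeff k := by
    intro n
    induction n with
    | zero => intro k; rw [hu0]; simp
    | succ n ih =>
      rw [hus, sq]
      exact hmulpos _ _ hCpos (haddpos _ _ hXpos (hmulpos _ _ ih ih))
  have hdiffpos : ∀ n k, 0 ≤ (u (n + 1) - u n).coeff k := by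
    intro n
    induction n with
    | zero =>
      have h1 : u (0 + 1) - u 0 = Polynomial.C (1/2 : ℝ) * Polynomial.X := by
        rw [hus 0, hu0]; ring
      rw [h1]
      exact hmulpos _ _ hCpos hXpos
    | succ n ih =>
      have h1 : u (n + 1 + 1) - u (n + 1)
          = Polynomial.C (1/2 : ℝ) * ((u (n + 1) - u n) * (u (n + 1) + u n)) := by
        rw [hus (n + 1), hus n]; ring
      rw [h1]
      exact hmulpos _ _ hCpos (hmulpos _ _ ih (haddpos _ _ (hupos (n + 1)) (hupos n)))
  have hgepos : ∀ n m, n ≤ m → ∀ k, 0 ≤ (u m - u n).coeff k := by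
    intro n m hnm
    induction m, hnm using Nat.le_induction with
    | base => simp
    | succ m hnm ih =>
      intro k
      have h1 : u (m + 1) - u n = (u (m + 1) - u m) + (u m - u n) := by ring
      rw [h1]
      exact haddpos _ _ (hdiffpos m) ih k
  -- eval at 1
  set a : ℕ → ℝ := fun n => (u n).eval 1 with ha
  have heval1 : ∀ p : Polynomial ℝ, (∀ k, 0 ≤ p.coeff k) → 0 ≤ p.eval 1 := by
    intro p hp
    rw [Polynomial.eval_eq_sum_range]
    exact Finset.sum_nonneg fun i _ => by simpa using hp i
  have ha0 : a 0 = 0 := by rw [ha]; simp [hu0]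
  have has : ∀ n, a (n + 1) = (1/2) * (1 + a n ^ 2) := by
    intro n
    rw [ha]
    simp [hus n]
  have hapos : ∀ n, 0 ≤ a n := fun n => heval1 _ (hupos n)
  have hale : ∀ n, a n ≤ 1 := by
    intro n
    induction n with
    | zero => rw [ha0]; norm_num
    | succ n ih => rw [has n]; nlinarith [hapos n]
  have hamono : ∀ n m, n ≤ m → a n ≤ a m := by
    intro n m hnm
    have h1 : 0 ≤ (u m - u n).eval 1 := heval1 _ (hgepos n m hnm)
    rw [Polynomial.eval_sub] at h1
    linarith
  have hrate : ∀ n : ℕ, (1 - a n) * (n + 2) ≤ 2 := by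
    intro n
    induction n with
    | zero => rw [ha0]; norm_num
    | succ n ih =>
      rw [has n]
      have h1 := hapos n
      have h2 := hale n
      have hn : (0:ℝ) ≤ n := Nat.cast_nonneg n
      push_cast
      nlinarith [mul_nonneg (sub_nonneg.mpr h2)
        (by nlinarith : (0:ℝ) ≤ 2 - (1 - a n) * ((n:ℝ) + 2)), sq_nonneg (1 - a n)]
  -- operator version of evaluation, with bounds
  have haeval : ∀ p : Polynomial ℝ, (∀ k, 0 ≤ p.coeff k) →
      IsSelfAdjoint (Polynomial.aeval Y p : H →L[ℝ] H) ∧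
      (∀ x, 0 ≤ ⟪(Polynomial.aeval Y p : H →L[ℝ] H) x, x⟫) ∧
      (∀ x, ⟪(Polynomial.aeval Y p : H →L[ℝ] H) x, x⟫ ≤ p.eval 1 * ‖x‖ ^ 2) := by
    intro p hp
    have hrep : (Polynomial.aeval Y p : H →L[ℝ] H)
        = ∑ i ∈ Finset.range (p.natDegree + 1), p.coeff i • Y ^ i :=
      Polynomial.aeval_eq_sum_range Y
    have hinner : ∀ x, ⟪(Polynomial.aeval Y p : H →L[ℝ] H) x, x⟫
        = ∑ i ∈ Finset.range (p.natDegree + 1), p.coeff i * ⟪(Y ^ i) x, x⟫ := by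
      intro x
      rw [hrep, sum_apply, sum_inner]
      refine Finset.sum_congr rfl fun i _ => ?_
      rw [smul_apply, real_inner_smul_left]
    have hev : p.eval 1 = ∑ i ∈ Finset.range (p.natDegree + 1), p.coeff i := by
      rw [Polynomial.eval_eq_sum_range]
      simp
    refine ⟨?_, fun x => ?_, fun x => ?_⟩
    · rw [IsSelfAdjoint, hrep, star_sum]
      refine Finset.sum_congr rfl fun i _ => ?_
      rw [star_smul, star_trivial, (hYsa.pow i).star_eq]
    · rw [hinner]
      exact Finset.sum_nonneg fun i _ => mul_nonneg (hp i) (hpowpos i x)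
    · rw [hinner, hev, Finset.sum_mul]
      exact Finset.sum_le_sum fun i _ =>
        mul_le_mul_of_nonneg_left (hpowcontr i x) (hp i)
  -- the operator sequence and its limit
  set V : ℕ → (H →L[ℝ] H) := fun n => (Polynomial.aeval Y (u n) : H →L[ℝ] H) with hV
  have hVbound : ∀ n m, n ≤ m → ‖V m - V n‖ ≤ a m - a n := by
    intro n m hnm
    have hd := hgepos n m hnm
    have hsub : V m - V n = (Polynomial.aeval Y (u m - u n) : H →L[ℝ] H) := by
      rw [hV]; simp [map_sub]
    have h1 := haeval _ hd
    have hc : (u m - u n).eval 1 = a m - a n := by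
      rw [Polynomial.eval_sub, ha]
    rw [hsub]
    refine norm_le_of_inner h1.1 ?_ h1.2.1 (fun x => ?_)
    · rw [← hc]; exact heval1 _ hd
    · rw [← hc]; exact h1.2.2 x
  have hcauchy : CauchySeq V := by
    refine cauchySeq_of_le_tendsto_0 (fun N => 2 / ((N : ℝ) + 2)) (fun n m N hn hm => ?_) ?_
    · have key : ∀ i j, N ≤ i → N ≤ j → i ≤ j → dist (V i) (V j) ≤ 2 / ((N : ℝ) + 2) := by
        intro i j hi hj hij
        rw [dist_eq_norm, norm_sub_rev]
        have h1 := hVbound i j hij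
        have h2 := hamono N i hi
        have h3 := hale j
        have h5 : (0:ℝ) < (N : ℝ) + 2 := by positivity
        rw [le_div_iff₀ h5]
        nlinarith [hrate N]
      rcases le_total n m with h | h
      · exact key n m hn hm h
      · rw [dist_comm]
        exact key m n hm hn h
    · have h := (tendsto_const_div_atTop_nhds_zero_nat (2 : ℝ)).comp
        (Filter.tendsto_add_atTop_nat 2)
      have heq : ((fun n : ℕ => 2 / (n : ℝ)) ∘ (fun n : ℕ => n + 2))
          = fun N : ℕ => 2 / ((N : ℝ) + 2) := by
        funext n
        simp only [Function.comp]
        push_cast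
        ring
      rwa [heq] at h
  obtain ⟨U, hU⟩ := cauchySeq_tendsto_of_complete hcauchy
  have hVsa : ∀ n, IsSelfAdjoint (V n) := fun n => (haeval _ (hupos n)).1
  have hUsa : IsSelfAdjoint U := by
    have h1 : Filter.Tendsto (fun n => star (V n)) Filter.atTop (nhds (star U)) := hU.star
    have h2 : (fun n => star (V n)) = V := funext fun n => (hVsa n).star_eq
    rw [h2] at h1
    exact tendsto_nhds_unique h1 hU
  have hVs : ∀ n, V (n + 1) = (1/2 : ℝ) • (Y + V n * V n) := by
    intro n
    rw [hV]
    simp only []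
    rw [hus, map_mul, map_add, Polynomial.aeval_X, map_pow, Polynomial.aeval_C,
      ← Algebra.smul_def, sq]
  have hfix : U = (1/2 : ℝ) • (Y + U * U) := by
    have h1 : Filter.Tendsto (fun n => V (n + 1)) Filter.atTop (nhds U) :=
      hU.comp (Filter.tendsto_add_atTop_nat 1)
    have h2 : Filter.Tendsto (fun n => (1/2 : ℝ) • (Y + V n * V n)) Filter.atTop
        (nhds ((1/2 : ℝ) • (Y + U * U))) :=
      (Filter.Tendsto.add tendsto_const_nhds (hU.mul hU)).const_smul _
    have h3 : (fun n => V (n + 1)) = fun n => (1/2 : ℝ) • (Y + V n * V n) :=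
      funext fun n => hVs n
    rw [h3] at h1
    exact tendsto_nhds_unique h1 h2
  refine ⟨1 - U, (IsSelfAdjoint.one (R := H →L[ℝ] H)).sub hUsa, ?_⟩
  have h2U : U + U = Y + U * U := by
    have h1 : (2 : ℝ) • U = (2 : ℝ) • ((1/2 : ℝ) • (Y + U * U)) := by rw [← hfix]
    rw [smul_smul] at h1
    norm_num at h1
    rw [← two_smul ℝ U, h1]
  have hexp : (1 - U) * (1 - U) = 1 - (U + U) + U * U := by noncomm_ring
  rw [← mul_def, hexp, h2U]
  rw [hY]
  noncomm_ring

end aux2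

-- extra small helper
section aux3
variable {H : Type*} [NormedAddCommGroup H] [InnerProductSpace ℝ H] [CompleteSpace H]
  {ι : Type*} (b : HilbertBasis ι ℝ H)

private lemma tr_sub {A B : H →L[ℝ] H}
    (hA : Summable fun i => ⟪A (b i), b i⟫) (hB : Summable fun i => ⟪B (b i), b i⟫) :
    ∑' i, ⟪(A - B) (b i), b i⟫ = (∑' i, ⟪A (b i), b i⟫) - ∑' i, ⟪B (b i), b i⟫ := by
  have h : ∀ i, ⟪(A - B) (b i), b i⟫ = ⟪A (b i), b i⟫ - ⟪B (b i), b i⟫ := fun i => by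
    rw [sub_apply, inner_sub_left]
  rw [tsum_congr h]
  exact Summable.tsum_sub hA hB

end aux3

theorem trace_identity_projection
    {H : Type*} [NormedAddCommGroup H] [InnerProductSpace ℝ H] [CompleteSpace H]
    {ι : Type*} (b : HilbertBasis ι ℝ H)
    (P Q : H →L[ℝ] H)
    (hPsa : IsSelfAdjoint P)
    (hPpos : ∀ x, 0 ≤ ⟪P x, x⟫)
    (hPcontr : ∀ x, ⟪P x, x⟫ ≤ ⟪x, x⟫)
    (hPtraceClass : Summable fun i => ⟪P (b i), b i⟫)
    (hQsa : IsSelfAdjoint Q) (hQproj : Q ∘L Q = Q) :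
    (∑' i, ⟪(Q ∘L P ∘L Q ∘L (1 - P)) (b i), b i⟫)
        = (∑' i, ⟪(P ∘L Q ∘L (1 - P)) (b i), b i⟫)
          + ∑' i, ⟪((Q ∘L P ∘L (1 - Q)) ∘L
              (ContinuousLinearMap.adjoint (Q ∘L P ∘L (1 - Q)))) (b i), b i⟫ ∧
      (∑' i, ⟪(Q ∘L P ∘L (1 - P)) (b i), b i⟫)
        ≤ ∑' i, ⟪(Q ∘L P ∘L Q ∘L (1 - P)) (b i), b i⟫ := by
  obtain ⟨R, hRsa, hR2⟩ := exists_sqrt P hPsa hPpos hPcontr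
  have hQQ : ∀ x, Q (Q x) = Q x := fun x => by
    have h := DFunLike.congr_fun hQproj x
    simpa using h
  -- R is Hilbert-Schmidt
  have hR : Summable fun i => ‖R (b i)‖ ^ 2 := by
    have h : (fun i => ‖R (b i)‖ ^ 2) = fun i => ⟪P (b i), b i⟫ := by
      funext i
      rw [← real_inner_self_eq_norm_sq, sa_inner' hRsa, ← comp_apply, hR2]
      exact real_inner_comm _ _
    rw [h]
    exact hPtraceClass
  have hsL : ∀ C : H →L[ℝ] H, Summable fun i => ‖(C ∘L R) (b i)‖ ^ 2 :=
    fun C => hs_comp_left b C hR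
  have hsR' : ∀ D : H →L[ℝ] H, Summable fun i => ‖(R ∘L D) (b i)‖ ^ 2 :=
    fun D => hs_comp_right b D hR
  have dW : ∀ C D : H →L[ℝ] H,
      Summable fun i => ⟪((C ∘L R) ∘L (R ∘L D)) (b i), b i⟫ :=
    fun C D => diag_summable b (hsL C) (hsR' D)
  have dR : ∀ D : H →L[ℝ] H,
      Summable fun i => ⟪(R ∘L (R ∘L D)) (b i), b i⟫ :=
    fun D => diag_summable b hR (hsR' D)
  -- operator identities
  have opA : Q ∘L P ∘L Q ∘L (1 - P)
      = ((Q ∘L R) ∘L (R ∘L Q)) - ((Q ∘L R) ∘L (R ∘L (Q ∘L (R ∘L R)))) := by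
    ext x
    simp [← hR2, map_sub]
  have opB : P ∘L Q ∘L (1 - P)
      = (R ∘L (R ∘L Q)) - (R ∘L (R ∘L (Q ∘L (R ∘L R)))) := by
    ext x
    simp [← hR2, map_sub]
  have hGadj : ContinuousLinearMap.adjoint (Q ∘L P ∘L (1 - Q))
      = ((1 - Q) ∘L P) ∘L Q := by
    have h1Q : IsSelfAdjoint (1 - Q : H →L[ℝ] H) :=
      (IsSelfAdjoint.one (R := H →L[ℝ] H)).sub hQsa
    rw [adjoint_comp, adjoint_comp, hPsa.adjoint_eq, hQsa.adjoint_eq, h1Q.adjoint_eq]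
  have opC : (Q ∘L P ∘L (1 - Q)) ∘L (((1 - Q) ∘L P) ∘L Q)
      = ((Q ∘L R) ∘L (R ∘L (R ∘L (R ∘L Q))))
        - ((Q ∘L R) ∘L (R ∘L (Q ∘L (R ∘L (R ∘L Q))))) := by
    ext x
    simp [← hR2, map_sub, hQQ]
  have opD : Q ∘L P ∘L (1 - P)
      = ((Q ∘L R) ∘L R) - ((Q ∘L R) ∘L (R ∘L (R ∘L R))) := by
    ext x
    simp [← hR2, map_sub]
  -- evaluations of the four traces in the goal
  have haveA : (∑' i, ⟪(Q ∘L P ∘L Q ∘L (1 - P)) (b i), b i⟫)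
      = (∑' i, ⟪((Q ∘L R) ∘L (R ∘L Q)) (b i), b i⟫)
        - ∑' i, ⟪((Q ∘L R) ∘L (R ∘L (Q ∘L (R ∘L R)))) (b i), b i⟫ := by
    rw [opA]
    exact tr_sub b (dW Q Q) (dW Q (Q ∘L (R ∘L R)))
  have haveB : (∑' i, ⟪(P ∘L Q ∘L (1 - P)) (b i), b i⟫)
      = (∑' i, ⟪(R ∘L (R ∘L Q)) (b i), b i⟫)
        - ∑' i, ⟪(R ∘L (R ∘L (Q ∘L (R ∘L R)))) (b i), b i⟫ := by
    rw [opB]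
    exact tr_sub b (dR Q) (dR (Q ∘L (R ∘L R)))
  have haveC : (∑' i, ⟪((Q ∘L P ∘L (1 - Q)) ∘L
        (ContinuousLinearMap.adjoint (Q ∘L P ∘L (1 - Q)))) (b i), b i⟫)
      = (∑' i, ⟪((Q ∘L R) ∘L (R ∘L (R ∘L (R ∘L Q)))) (b i), b i⟫)
        - ∑' i, ⟪((Q ∘L R) ∘L (R ∘L (Q ∘L (R ∘L (R ∘L Q))))) (b i), b i⟫ := by
    rw [hGadj, opC]
    exact tr_sub b (dW Q (R ∘L (R ∘L Q))) (dW Q (Q ∘L (R ∘L (R ∘L Q))))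
  have haveD : (∑' i, ⟪(Q ∘L P ∘L (1 - P)) (b i), b i⟫)
      = (∑' i, ⟪((Q ∘L R) ∘L R) (b i), b i⟫)
        - ∑' i, ⟪((Q ∘L R) ∘L (R ∘L (R ∘L R))) (b i), b i⟫ := by
    rw [opD]
    exact tr_sub b (diag_summable b (hsL Q) hR) (dW Q (R ∘L R))
  -- rotation identities
  have e1 : (∑' i, ⟪((Q ∘L R) ∘L (R ∘L Q)) (b i), b i⟫)
      = ∑' i, ⟪(R ∘L (R ∘L Q)) (b i), b i⟫ := by
    rw [trace_comm b (hsL Q) (hsR' Q), trace_comm b hR (hsR' Q)]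
    congr 1
    ext x
    simp [hQQ]
  have e2 : (∑' i, ⟪((Q ∘L R) ∘L (R ∘L (Q ∘L (R ∘L R)))) (b i), b i⟫)
      = ∑' i, ⟪((Q ∘L R) ∘L (R ∘L (Q ∘L (R ∘L (R ∘L Q))))) (b i), b i⟫ := by
    rw [trace_comm b (hsL Q) (hsR' (Q ∘L (R ∘L R))),
      trace_comm b (hsL Q) (hsR' (Q ∘L (R ∘L (R ∘L Q))))]
    congr 1
    ext x
    simp [hQQ]
  have eRRRQR : (∑' i, ⟪(R ∘L (R ∘L (R ∘L (Q ∘L R)))) (b i), b i⟫)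
      = ∑' i, ⟪(R ∘L (R ∘L (Q ∘L (R ∘L R)))) (b i), b i⟫ := by
    rw [trace_comm b hR (hsR' (R ∘L (Q ∘L R)))]
    congr 1
  have e3 : (∑' i, ⟪((Q ∘L R) ∘L (R ∘L (R ∘L (R ∘L Q)))) (b i), b i⟫)
      = ∑' i, ⟪(R ∘L (R ∘L (Q ∘L (R ∘L R)))) (b i), b i⟫ := by
    rw [trace_comm b (hsL Q) (hsR' (R ∘L (R ∘L Q)))]
    rw [show (R ∘L (R ∘L (R ∘L Q))) ∘L (Q ∘L R) = R ∘L (R ∘L (R ∘L (Q ∘L R))) from by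
      ext x; simp [hQQ]]
    exact eRRRQR
  have e4 : (∑' i, ⟪((Q ∘L R) ∘L R) (b i), b i⟫)
      = ∑' i, ⟪(R ∘L (R ∘L Q)) (b i), b i⟫ := by
    rw [trace_comm b (hsL Q) hR, trace_comm b hR (hsR' Q)]
    congr 1
  have e5 : (∑' i, ⟪((Q ∘L R) ∘L (R ∘L (R ∘L R))) (b i), b i⟫)
      = ∑' i, ⟪(R ∘L (R ∘L (Q ∘L (R ∘L R)))) (b i), b i⟫ := by
    rw [trace_comm b (hsL Q) (hsR' (R ∘L R))]
    rw [show (R ∘L (R ∘L R)) ∘L (Q ∘L R) = R ∘L (R ∘L (R ∘L (Q ∘L R))) from by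
      ext x; simp]
    exact eRRRQR
  -- nonnegativity of tr(G G†)
  have hGG : 0 ≤ ∑' i, ⟪((Q ∘L P ∘L (1 - Q)) ∘L
      (ContinuousLinearMap.adjoint (Q ∘L P ∘L (1 - Q)))) (b i), b i⟫ := by
    refine tsum_nonneg fun i => ?_
    rw [comp_apply, ← adjoint_inner_right]
    exact real_inner_self_nonneg
  refine ⟨?_, ?_⟩
  · rw [haveA, haveB, haveC]
    linarith [e1, e2, e3]
  · rw [haveD, haveA]
    have hC := haveC
    linarith [e1, e2, e3, e4, e5, hGG, hC]
end

section
/- Let $b_0 = 0$ and for $1 \leq l \leq m$ let $b_l = \sum_{k=1}^{l} a_k$, where $a_1,\dots,a_m$ are complex numbers whose sum over each interval $I$ of a partition of $\{1,\dots,m\}$ into intervals of length at most $L$ vanishes. Then $\sum_{l=0}^m |b_l|^2 \leq L^2 \sum_{l=1}^m |a_l|^2$. -/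
open Finset

lemma sum_Ioc_partition (f : ℕ → ℝ) (t : ℕ → ℕ) (K : ℕ)
    (hm : ∀ k < K, t k ≤ t (k + 1)) :
    ∑ k ∈ range K, ∑ l ∈ Ioc (t k) (t (k + 1)), f l = ∑ l ∈ Ioc (t 0) (t K), f l := by
  induction K with
  | zero => simp
  | succ K ih =>
    have h0K : t 0 ≤ t K := by
      clear ih
      induction K with
      | zero => exact le_refl _
      | succ K ih =>
        exact le_trans (ih fun k hk => hm k (by omega)) (hm K (by omega))
    rw [sum_range_succ, ih (fun k hk => hm k (by omega)),
      Finset.sum_Ioc_consecutive _ h0K (hm K (by omega))]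

set_option maxHeartbeats 1000000 in
theorem partial_sums_sq_bound (m K : ℕ) (L : ℝ) (a : ℕ → ℂ) (t : ℕ → ℕ)
    (h0 : t 0 = 0) (hK : t K = m)
    (hmono : ∀ k < K, t k < t (k + 1))
    (hlen : ∀ k < K, ((t (k + 1) : ℝ) - t k) ≤ L)
    (hzero : ∀ k < K, ∑ l ∈ Finset.Ioc (t k) (t (k + 1)), a l = 0) :
    ∑ l ∈ Finset.range (m + 1), ‖∑ j ∈ Finset.Icc 1 l, a j‖^2 ≤
      L^2 * ∑ l ∈ Finset.Icc 1 m, ‖a l‖^2 := by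
  -- partial sums vanish at interval endpoints
  have hb : ∀ k ≤ K, ∑ j ∈ Icc 1 (t k), a j = 0 := by
    intro k hk
    induction k with
    | zero => simp [h0]
    | succ k ih =>
      have h2 : t k ≤ t (k + 1) := (hmono k (by omega)).le
      have e1 : Icc 1 (t (k+1)) = Ioc 0 (t (k+1)) := by ext x; simp; omega
      rw [e1, ← Finset.sum_Ioc_consecutive _ (Nat.zero_le _) h2]
      have e2 : Ioc 0 (t k) = Icc 1 (t k) := by ext x; simp; omega
      rw [e2, ih (by omega), hzero k (by omega), add_zero]
  rcases eq_or_lt_of_le (Nat.zero_le K) with hK0 | hK0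
  · have hm0 : m = 0 := by rw [← hK, ← hK0, h0]
    subst hm0
    simp
  have hL1 : (1:ℝ) ≤ L := by
    have h1 := hlen 0 hK0
    have h2 := hmono 0 hK0
    have h3 : ((t 0 : ℝ)) + 1 ≤ t 1 := by exact_mod_cast h2
    linarith
  have hL0 : (0:ℝ) ≤ L := by linarith
  have hr : range (m+1) = insert 0 (Ioc 0 m) := by ext x; simp
  rw [hr, sum_insert (by simp)]
  have hz : ‖∑ j ∈ Icc 1 0, a j‖^2 = 0 := by simp
  rw [hz, zero_add]
  have hIcc : Icc 1 m = Ioc 0 m := by ext x; simp; omega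
  rw [hIcc]
  have hmle : ∀ k < K, t k ≤ t (k+1) := fun k hk => (hmono k hk).le
  conv_lhs => rw [show (0:ℕ) = t 0 from h0.symm, show m = t K from hK.symm,
    ← sum_Ioc_partition (fun l => ‖∑ j ∈ Icc 1 l, a j‖^2) t K hmle]
  conv_rhs => rw [show (0:ℕ) = t 0 from h0.symm, show m = t K from hK.symm,
    ← sum_Ioc_partition (fun l => ‖a l‖^2) t K hmle]
  rw [mul_sum]
  apply Finset.sum_le_sum
  intro k hk
  rw [mem_range] at hk
  set S := Ioc (t k) (t (k+1)) with hS
  have key : ∀ l ∈ S, ‖∑ j ∈ Icc 1 l, a j‖^2 ≤ L * ∑ j ∈ S, ‖a j‖^2 := by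
    intro l hl
    obtain ⟨hl1, hl2⟩ := mem_Ioc.mp hl
    have e1 : ∑ j ∈ Icc 1 l, a j = ∑ j ∈ Ioc (t k) l, a j := by
      have e : Icc 1 l = Ioc 0 l := by ext x; simp; omega
      rw [e, ← Finset.sum_Ioc_consecutive _ (Nat.zero_le _) hl1.le]
      have e2 : Ioc 0 (t k) = Icc 1 (t k) := by ext x; simp; omega
      rw [e2, hb k (by omega), zero_add]
    rw [e1]
    have hsub : Ioc (t k) l ⊆ S := by
      rw [hS]; exact Ioc_subset_Ioc_right hl2
    calc ‖∑ j ∈ Ioc (t k) l, a j‖^2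
        ≤ (∑ j ∈ Ioc (t k) l, ‖a j‖)^2 := by
          apply pow_le_pow_left₀ (norm_nonneg _) (norm_sum_le _ _)
      _ ≤ ((Ioc (t k) l).card : ℝ) * ∑ j ∈ Ioc (t k) l, ‖a j‖^2 := by
          exact sq_sum_le_card_mul_sum_sq
      _ ≤ L * ∑ j ∈ S, ‖a j‖^2 := by
          apply mul_le_mul
          · rw [Nat.card_Ioc]
            have : ((l - t k : ℕ) : ℝ) ≤ (t (k+1) : ℝ) - t k := by
              rw [Nat.cast_sub hl1.le]
              have : (l : ℝ) ≤ t (k+1) := by exact_mod_cast hl2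
              linarith
            exact this.trans (hlen k hk)
          · exact sum_le_sum_of_subset_of_nonneg hsub (fun _ _ _ => sq_nonneg _)
          · exact sum_nonneg fun _ _ => sq_nonneg _
          · exact hL0
  have cardS : (S.card : ℝ) ≤ L := by
    rw [hS, Nat.card_Ioc, Nat.cast_sub (hmle k hk)]
    exact hlen k hk
  calc ∑ l ∈ S, ‖∑ j ∈ Icc 1 l, a j‖^2
      ≤ ∑ _l ∈ S, (L * ∑ j ∈ S, ‖a j‖^2) := Finset.sum_le_sum key
    _ = (S.card : ℝ) * (L * ∑ j ∈ S, ‖a j‖^2) := by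
        rw [sum_const, nsmul_eq_mul]
    _ ≤ L * (L * ∑ j ∈ S, ‖a j‖^2) := by
        have hpos : (0:ℝ) ≤ L * ∑ j ∈ S, ‖a j‖^2 :=
          mul_nonneg hL0 (sum_nonneg fun _ _ => sq_nonneg _)
        exact mul_le_mul_of_nonneg_right cardS hpos
    _ = L^2 * ∑ j ∈ S, ‖a j‖^2 := by ring
end
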